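/- The maximum over all real Euler angles (α₁,β₁,γ₁,α₂,β₂,γ₂) ∈ ℝ⁶ of the measurement-assisted transition probability P_{1→2}^{(1)}(U(α₁,β₁,γ₁), U(α₂,β₂,γ₂)) equals (3/50)·(9+√6); that is, the supremum is attained and its value is (3/50)·(9+√6) ≈ 0.687. -/

import Mathlib

open Matrix

/-- Measurement-assisted transition probability `P_{1→k}^{(j)}`:
indices are 0-based, so state `|1⟩` is index `0`, state `|2⟩` is index `1`,
state `|3⟩` is index `2`.  Here `ρ = U₁|1⟩⟨1|U₁†`, `P = |j⟩⟨j|`, and the value is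
`⟨k| U₂ (P ρ P + (I−P) ρ (I−P)) U₂† |k⟩` (a real number). -/
noncomputable def measProb (j k : Fin 3) (U₁ U₂ : Matrix (Fin 3) (Fin 3) ℂ) : ℝ :=
  let ρ : Matrix (Fin 3) (Fin 3) ℂ := U₁ * Matrix.single 0 0 1 * U₁ᴴ
  let P : Matrix (Fin 3) (Fin 3) ℂ := Matrix.single j j 1
  ((U₂ * (P * ρ * P + (1 - P) * ρ * (1 - P)) * U₂ᴴ) k k).re

/-- The Wigner matrix `U(α,β,γ)` of the spin-1 `ZYZ` Euler parameterization. -/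
noncomputable def Umat (α β γ : ℝ) : Matrix (Fin 3) (Fin 3) ℂ :=
  !![Complex.exp (-Complex.I * (↑α + ↑γ)) * (Real.cos (β/2) : ℂ)^2,
       -(Complex.exp (-Complex.I * ↑α) / (Real.sqrt 2 : ℂ)) * (Real.sin β : ℂ),
       Complex.exp (-Complex.I * (↑α - ↑γ)) * (Real.sin (β/2) : ℂ)^2;
     (Complex.exp (-Complex.I * ↑γ) / (Real.sqrt 2 : ℂ)) * (Real.sin β : ℂ),
       (Real.cos β : ℂ),
       -(Complex.exp (Complex.I * ↑γ) / (Real.sqrt 2 : ℂ)) * (Real.sin β : ℂ);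
     Complex.exp (Complex.I * (↑α - ↑γ)) * (Real.sin (β/2) : ℂ)^2,
       (Complex.exp (Complex.I * ↑α) / (Real.sqrt 2 : ℂ)) * (Real.sin β : ℂ),
       Complex.exp (Complex.I * (↑α + ↑γ)) * (Real.cos (β/2) : ℂ)^2]

lemma reExp (r t : ℝ) : ((r : ℂ) * Complex.exp (-Complex.I * t)).re = r * Real.cos t := by
  rw [show -Complex.I * (t:ℂ) = (↑(-t):ℂ) * Complex.I by push_cast; ring, Complex.exp_mul_I]
  simp [Complex.mul_re, ← Complex.ofReal_cos, ← Complex.ofReal_sin]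

lemma crossre (α₁ γ₁ γ₂ β₁ β₂ : ℝ) :
    2 * (((Real.cos β₂ : ℂ) * ((Complex.exp (-Complex.I * ↑γ₁) / ((Real.sqrt 2 : ℝ) : ℂ)) * ((Real.sin β₁ : ℝ) : ℂ))) *
       (starRingEnd ℂ) ((-(Complex.exp (Complex.I * ↑γ₂) / ((Real.sqrt 2 : ℝ) : ℂ)) * ((Real.sin β₂ : ℝ) : ℂ)) * (Complex.exp (Complex.I * (↑α₁ - ↑γ₁)) * (((Real.sin (β₁/2) : ℝ) : ℂ))^2))).re
    = - (Real.cos β₂ * Real.sin β₂ * Real.sin β₁ * Real.sin (β₁/2)^2 * Real.cos (α₁+γ₂)) := by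
  have hc2 : (starRingEnd ℂ) ((-(Complex.exp (Complex.I * ↑γ₂) / ((Real.sqrt 2 : ℝ) : ℂ)) * ((Real.sin β₂ : ℝ) : ℂ)) * (Complex.exp (Complex.I * (↑α₁ - ↑γ₁)) * (((Real.sin (β₁/2) : ℝ) : ℂ))^2))
      = (-(Complex.exp (-Complex.I * ↑γ₂) / ((Real.sqrt 2 : ℝ) : ℂ)) * ((Real.sin β₂ : ℝ) : ℂ)) * (Complex.exp (-Complex.I * (↑α₁ - ↑γ₁)) * (((Real.sin (β₁/2) : ℝ) : ℂ))^2) := by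
    simp only [_root_.map_mul, map_neg, map_div₀, map_pow, Complex.conj_ofReal, ← Complex.exp_conj,
      map_sub, Complex.conj_I]
  rw [hc2]
  have hsq : ((Real.sqrt 2 : ℝ) : ℂ) * ((Real.sqrt 2 : ℝ) : ℂ) = 2 := by
    rw [← Complex.ofReal_mul, Real.mul_self_sqrt (by norm_num)]; norm_num
  have h2ne : ((Real.sqrt 2 : ℝ) : ℂ) ≠ 0 := by
    simp [Real.sqrt_ne_zero']
  have key : (((Real.cos β₂ : ℂ) * ((Complex.exp (-Complex.I * ↑γ₁) / ((Real.sqrt 2 : ℝ) : ℂ)) * ((Real.sin β₁ : ℝ) : ℂ))) *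
      ((-(Complex.exp (-Complex.I * ↑γ₂) / ((Real.sqrt 2 : ℝ) : ℂ)) * ((Real.sin β₂ : ℝ) : ℂ)) * (Complex.exp (-Complex.I * (↑α₁ - ↑γ₁)) * (((Real.sin (β₁/2) : ℝ) : ℂ))^2)))
      = ((-(Real.cos β₂ * Real.sin β₂ * Real.sin β₁ * Real.sin (β₁/2)^2)/2 : ℝ) : ℂ) *
        Complex.exp (-Complex.I * ↑(α₁ + γ₂)) := by
    rw [show (-Complex.I * (↑(α₁ + γ₂) : ℂ)) = (-Complex.I * ↑γ₁) + ((-Complex.I * ↑γ₂) + (-Complex.I * ((α₁:ℂ) - ↑γ₁))) by push_cast; ring]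
    rw [Complex.exp_add, Complex.exp_add]
    field_simp
    rw [show ((Real.sqrt 2 : ℝ) : ℂ) ^ 2 = 2 by rw [sq, hsq]]
    push_cast
    ring
  rw [key, reExp]
  ring

lemma key (U₁ U₂ : Matrix (Fin 3) (Fin 3) ℂ) :
    measProb 0 1 U₁ U₂ = Complex.normSq (U₂ 1 0) * Complex.normSq (U₁ 0 0)
      + Complex.normSq (U₂ 1 1 * U₁ 1 0 + U₂ 1 2 * U₁ 2 0) := by
  simp only [measProb, Matrix.mul_apply, Fin.sum_univ_three,
    Matrix.conjTranspose_apply, Matrix.add_apply, Matrix.sub_apply, Matrix.one_apply,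
    Matrix.single, Matrix.of_apply]
  norm_num [Fin.ext_iff, Complex.normSq_apply, Complex.add_re, Complex.add_im,
    Complex.mul_re, Complex.mul_im, Complex.conj_re, Complex.conj_im]
  ring

lemma formula (α₁ β₁ γ₁ α₂ β₂ γ₂ : ℝ) :
    measProb 0 1 (Umat α₁ β₁ γ₁) (Umat α₂ β₂ γ₂)
      = Real.sin β₂^2/2 * Real.cos (β₁/2)^4
      + Real.cos β₂^2 * Real.sin β₁^2 / 2
      + Real.sin β₂^2/2 * Real.sin (β₁/2)^4
      - Real.cos β₂ * Real.sin β₂ * Real.sin β₁ * Real.sin (β₁/2)^2 * Real.cos (α₁+γ₂) := by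
  rw [key]
  have e00 : Umat α₁ β₁ γ₁ 0 0 = Complex.exp (-Complex.I * (↑α₁ + ↑γ₁)) * (Real.cos (β₁/2) : ℂ)^2 := by
    simp [Umat]
  have e10 : Umat α₁ β₁ γ₁ 1 0 = (Complex.exp (-Complex.I * ↑γ₁) / (Real.sqrt 2 : ℂ)) * (Real.sin β₁ : ℂ) := by
    simp [Umat]
  have e20 : Umat α₁ β₁ γ₁ 2 0 = Complex.exp (Complex.I * (↑α₁ - ↑γ₁)) * (Real.sin (β₁/2) : ℂ)^2 := by
    simp [Umat]
  have f10 : Umat α₂ β₂ γ₂ 1 0 = (Complex.exp (-Complex.I * ↑γ₂) / (Real.sqrt 2 : ℂ)) * (Real.sin β₂ : ℂ) := by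
    simp [Umat]
  have f11 : Umat α₂ β₂ γ₂ 1 1 = (Real.cos β₂ : ℂ) := by simp [Umat]
  have f12 : Umat α₂ β₂ γ₂ 1 2 = -(Complex.exp (Complex.I * ↑γ₂) / (Real.sqrt 2 : ℂ)) * (Real.sin β₂ : ℂ) := by
    simp [Umat]
  rw [e00, e10, e20, f10, f11, f12, Complex.normSq_add]
  have n1 : Complex.normSq ((Complex.exp (-Complex.I * ↑γ₂) / ((Real.sqrt 2 : ℝ) : ℂ)) * ((Real.sin β₂ : ℝ) : ℂ)) = Real.sin β₂^2 / 2 := by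
    simp [Complex.normSq_eq_norm_sq, Complex.norm_exp, _root_.map_mul, map_div₀, ← Complex.ofReal_sin,
      Complex.norm_real, sq_abs]
    ring
  have n2 : Complex.normSq (Complex.exp (-Complex.I * ((α₁:ℂ) + ↑γ₁)) * ((Real.cos (β₁/2) : ℝ) : ℂ)^2) = Real.cos (β₁/2)^4 := by
    simp [Complex.normSq_eq_norm_sq, Complex.norm_exp, _root_.map_mul, map_pow, ← Complex.ofReal_cos,
      Complex.norm_real, sq_abs, abs_sq]
    ring
  have n3 : Complex.normSq ((Real.cos β₂ : ℂ) * ((Complex.exp (-Complex.I * ↑γ₁) / ((Real.sqrt 2 : ℝ) : ℂ)) * ((Real.sin β₁ : ℝ) : ℂ))) = Real.cos β₂^2 * Real.sin β₁^2 / 2 := by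
    simp [Complex.normSq_eq_norm_sq, Complex.norm_exp, _root_.map_mul, map_div₀, ← Complex.ofReal_sin,
      ← Complex.ofReal_cos, Complex.norm_real, sq_abs]
    ring
  have n4 : Complex.normSq ((-(Complex.exp (Complex.I * ↑γ₂) / ((Real.sqrt 2 : ℝ) : ℂ)) * ((Real.sin β₂ : ℝ) : ℂ)) * (Complex.exp (Complex.I * ((α₁:ℂ) - ↑γ₁)) * ((Real.sin (β₁/2) : ℝ) : ℂ)^2)) = Real.sin β₂^2 * Real.sin (β₁/2)^4 / 2 := by
    simp [Complex.normSq_eq_norm_sq, Complex.norm_exp, _root_.map_mul, map_div₀, map_pow, ← Complex.ofReal_sin,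
      Complex.norm_real, sq_abs, abs_sq]
    simp [mul_pow, inv_pow, sq_abs, Real.sq_sqrt (by norm_num : (0:ℝ) ≤ 2)]
    ring
  rw [n1, n2, n3, n4, crossre]
  ring


lemma quartic (a w : ℝ) (hw : w^2 = 6) (hw2 : 2 ≤ w) (hw3 : w ≤ 5/2)
    (ha0 : 0 ≤ a) (ha1 : a ≤ 1) :
    ((6*(a-a^2)-1)/4)^2 + a^2*(a-a^2) ≤ ((27+3*w)/50 - (1+2*(a-a^2))/4)^2 := by
  nlinarith [mul_nonneg (mul_nonneg (sq_nonneg (10*a-4-w)) (by linarith : (0:ℝ) ≤ 1-a))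
      (by nlinarith : (0:ℝ) ≤ (-36+21*w)/50),
    mul_nonneg (mul_nonneg (sq_nonneg (10*a-4-w)) ha0)
      (by nlinarith : (0:ℝ) ≤ (24+11*w)/50),
    mul_nonneg (mul_nonneg (sq_nonneg (10*a-4-w)) ha0) (by linarith : (0:ℝ) ≤ 1-a)]

lemma gensq (x r : ℝ) (h : x^2 ≤ r^2) (hr : 0 ≤ r) : x ≤ r := by nlinarith

set_option maxHeartbeats 1000000 in
lemma bound (c s u v k : ℝ) (hcs : c^2+s^2=1) (huv : u^2+v^2=1) (hk : k^2 ≤ 1) :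
    v^2/2*c^4 + u^2*(2*s*c)^2/2 + v^2/2*s^4 - u*v*(2*s*c)*s^2*k ≤ 3/50*(9+Real.sqrt 6) := by
  have hw : (Real.sqrt 6)^2 = 6 := Real.sq_sqrt (by norm_num)
  have hw0 : 0 ≤ Real.sqrt 6 := Real.sqrt_nonneg 6
  have hw2 : 2 ≤ Real.sqrt 6 := by nlinarith
  have hw3 : Real.sqrt 6 ≤ 5/2 := by nlinarith
  have ha0 : (0:ℝ) ≤ s^2 := sq_nonneg s
  have ha1 : s^2 ≤ 1 := by nlinarith [sq_nonneg c]
  have hp : s^2*c^2 = s^2 - (s^2)^2 := by linear_combination s^2*hcs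
  -- X = f - (1+2p)/4
  have h1 : (v^2/2*c^4 + u^2*(2*s*c)^2/2 + v^2/2*s^4 - u*v*(2*s*c)*s^2*k) - (1+2*(s^2*c^2))/4
      = ((6*(s^2*c^2)-1)/4)*(u^2-v^2) + (-(k*s^3*c))*(2*u*v) := by
    linear_combination (1/2*v^2 - 1/2*s^2 + s^2*v^2 + 1/2*s^2*u^2 + 1/2*c^2*v^2)*hcs
      + (1/4 + 1/2*s^2 - 1/2*s^4)*huv
  have hc2 : (u^2-v^2)^2 + (2*u*v)^2 = 1 := by
    have h : (u^2-v^2)^2 + (2*u*v)^2 = (u^2+v^2)^2 := by ring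
    rw [h, huv]; norm_num
  have hX2 : ((v^2/2*c^4 + u^2*(2*s*c)^2/2 + v^2/2*s^4 - u*v*(2*s*c)*s^2*k) - (1+2*(s^2*c^2))/4)^2
      ≤ ((6*(s^2*c^2)-1)/4)^2 + (-(k*s^3*c))^2 := by
    rw [h1]
    nlinarith [sq_nonneg (((6*(s^2*c^2)-1)/4)*(2*u*v) - (-(k*s^3*c))*(u^2-v^2))]
  have hE2 : (-(k*s^3*c))^2 ≤ (s^2)^2*(s^2*c^2) := by
    nlinarith [mul_le_mul_of_nonneg_right hk (sq_nonneg (s^3*c))]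
  have hQ : ((6*(s^2*c^2)-1)/4)^2 + (s^2)^2*(s^2*c^2)
      ≤ ((27+3*Real.sqrt 6)/50 - (1+2*(s^2*c^2))/4)^2 := by
    rw [hp]
    exact quartic (s^2) (Real.sqrt 6) hw hw2 hw3 ha0 ha1
  have hR0 : 0 ≤ (27+3*Real.sqrt 6)/50 - (1+2*(s^2*c^2))/4 := by
    rw [hp]
    nlinarith [sq_nonneg (2*s^2-1)]
  have hXR := gensq _ _ (le_trans hX2 (by linarith [hE2, hQ])) hR0
  linarith [hXR]


set_option maxHeartbeats 1000000 in
lemma attained :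
    measProb 0 1 (Umat Real.pi (Real.arccos ((1-Real.sqrt 6)/5)) 0)
        (Umat 0 (Real.arccos ((Real.sqrt 6-1)/5)/2) 0)
      = 3/50*(9+Real.sqrt 6) := by
  have hw : (Real.sqrt 6)^2 = 6 := Real.sq_sqrt (by norm_num)
  have hw0 : 0 ≤ Real.sqrt 6 := Real.sqrt_nonneg 6
  have hw2 : 2 ≤ Real.sqrt 6 := by nlinarith
  have hw3 : Real.sqrt 6 ≤ 5/2 := by nlinarith
  set w := Real.sqrt 6
  set β₁ := Real.arccos ((1-w)/5) with hb1
  set β₂ := Real.arccos ((w-1)/5)/2 with hb2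
  have hx1 : (-1:ℝ) ≤ (1-w)/5 := by linarith
  have hx2 : ((1-w)/5 : ℝ) ≤ 1 := by linarith
  have hy1 : (-1:ℝ) ≤ (w-1)/5 := by linarith
  have hy2 : ((w-1)/5 : ℝ) ≤ 1 := by linarith
  have hcb1 : Real.cos β₁ = (1-w)/5 := Real.cos_arccos hx1 hx2
  have hcb2 : Real.cos (2*β₂) = (w-1)/5 := by
    rw [hb2, mul_div_cancel₀ _ (two_ne_zero)]
    exact Real.cos_arccos hy1 hy2
  -- squares
  have hA2 : Real.sin (β₁/2)^2 = (4+w)/10 := by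
    have h := Real.sin_sq_eq_half_sub (β₁/2)
    rw [show 2*(β₁/2) = β₁ by ring, hcb1] at h
    rw [h]; ring
  have hA1 : Real.cos (β₁/2)^4 = ((6-w)/10)^2 := by
    have h : Real.cos (β₁/2)^2 = (6-w)/10 := by
      have h2 := Real.sin_sq_add_cos_sq (β₁/2)
      rw [hA2] at h2; linarith
    rw [show Real.cos (β₁/2)^4 = (Real.cos (β₁/2)^2)^2 by ring, h]
  have hA3 : Real.sin (β₁/2)^4 = ((4+w)/10)^2 := by
    rw [show Real.sin (β₁/2)^4 = (Real.sin (β₁/2)^2)^2 by ring, hA2]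
  have hsb1 : Real.sin β₁ = Real.sqrt (1 - ((1-w)/5)^2) := by
    rw [hb1, Real.sin_arccos]
  have hA4 : Real.sin β₁^2 = (18+2*w)/25 := by
    rw [hsb1, Real.sq_sqrt (by nlinarith)]
    nlinarith
  have hA5 : Real.cos β₂^2 = (4+w)/10 := by
    have h := Real.cos_sq β₂
    rw [hcb2] at h
    rw [h]; ring
  have hA6 : Real.sin β₂^2 = (6-w)/10 := by
    have h2 := Real.sin_sq_add_cos_sq β₂
    rw [hA5] at h2; linarith
  have hA7 : Real.cos β₂ * Real.sin β₂ * Real.sin β₁ = (9+w)/25 := by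
    have hs2 : Real.sin (2*β₂) = 2 * Real.sin β₂ * Real.cos β₂ := Real.sin_two_mul β₂
    have hs2' : Real.sin (2*β₂) = Real.sqrt (1 - ((w-1)/5)^2) := by
      rw [hb2, mul_div_cancel₀ _ (two_ne_zero), Real.sin_arccos]
    have hprod : Real.sqrt (1 - ((w-1)/5)^2) * Real.sqrt (1 - ((1-w)/5)^2)
        = 1 - ((w-1)/5)^2 := by
      rw [show (1 - ((1-w)/5)^2 : ℝ) = 1 - ((w-1)/5)^2 by ring]
      exact Real.mul_self_sqrt (by nlinarith)
    rw [hsb1]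
    have : Real.cos β₂ * Real.sin β₂ = Real.sqrt (1 - ((w-1)/5)^2) / 2 := by
      rw [← hs2', hs2]; ring
    rw [this, div_mul_eq_mul_div, hprod]
    nlinarith
  rw [formula, hA1, hA3, hA4, hA5, hA6]
  rw [show Real.pi + 0 = Real.pi by ring, Real.cos_pi]
  rw [show Real.cos β₂ * Real.sin β₂ * Real.sin β₁ * Real.sin (β₁/2)^2 * (-1 : ℝ)
      = -((Real.cos β₂ * Real.sin β₂ * Real.sin β₁) * Real.sin (β₁/2)^2) by ring, hA7, hA2]
  linear_combination (2/125 - w/1000) * hw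


/-- the maximum over all real Euler angles of the
measurement-assisted transition probability
`P_{1→2}^{(1)}(U(α₁,β₁,γ₁), U(α₂,β₂,γ₂))` is attained and equals
`(3/50)·(9+√6) ≈ 0.687`.  (0-based indices: `j = 0` is `|1⟩`, `k = 1` is `|2⟩`.) -/
theorem stmt11 :
    IsGreatest
      {x : ℝ | ∃ α₁ β₁ γ₁ α₂ β₂ γ₂ : ℝ,
        x = measProb 0 1 (Umat α₁ β₁ γ₁) (Umat α₂ β₂ γ₂)}
      ((3/50) * (9 + Real.sqrt 6)) := by
  constructor
  · exact ⟨Real.pi, Real.arccos ((1-Real.sqrt 6)/5), 0, 0,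
      Real.arccos ((Real.sqrt 6-1)/5)/2, 0, attained.symm⟩
  · rintro x ⟨α₁, β₁, γ₁, α₂, β₂, γ₂, rfl⟩
    rw [formula]
    have hs : Real.sin β₁ = 2*Real.sin (β₁/2)*Real.cos (β₁/2) := by
      have h := Real.sin_two_mul (β₁/2)
      rw [show 2*(β₁/2) = β₁ by ring] at h
      exact h
    rw [hs]
    have h := bound (Real.cos (β₁/2)) (Real.sin (β₁/2)) (Real.cos β₂) (Real.sin β₂)
      (Real.cos (α₁+γ₂)) (Real.cos_sq_add_sin_sq (β₁/2)) (Real.cos_sq_add_sin_sq β₂)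
      (Real.cos_sq_le_one (α₁+γ₂))
    nlinarith [h]
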